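/- (Sequence-level diffusion duality.) Fix integers K ≥ 2 and L ≥ 1, indices k : Fin L → Fin K, and ᾱ ∈ [0,1). Let μ be the product measure over ℓ : Fin L of the Gaussian measures N(ᾱ e_{k ℓ}, (1−ᾱ²) I_K) on ℝ^K, a probability measure on (Fin L → ℝ^K). Let A : ℝ^K → Fin K be the least-index argmax map, applied coordinatewise to give Â : (Fin L → ℝ^K) → (Fin L → Fin K). Then the pushforward Â_* μ is the product over ℓ : Fin L of the categorical distributions on Fin K assigning to i the mass 𝒯(ᾱ)·(if i = k ℓ then 1 else 0) + (1 − 𝒯(ᾱ))/K; i.e., the forward Uniform-state process factorizes over tokens and is the argmax pushforward of the factorized Gaussian process. -/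

import Mathlib

open MeasureTheory ProbabilityTheory

/-- The standard normal density `φ(z) = exp(-z²/2)/√(2π)`. -/
noncomputable def stdGaussianPDF (z : ℝ) : ℝ :=
  Real.exp (-z ^ 2 / 2) / Real.sqrt (2 * Real.pi)

/-- The standard normal cumulative distribution function `Φ(z) = ∫_{-∞}^z φ(u) du`. -/
noncomputable def stdGaussianCDF (z : ℝ) : ℝ :=
  ∫ u in Set.Iic z, stdGaussianPDF u

/-- The diffusion transformation operator
`𝒯(ᾱ) = (K/(K-1)) (∫_ℝ φ(z - ᾱ/√(1-ᾱ²)) Φ(z)^{K-1} dz - 1/K)`. -/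
noncomputable def diffTransform (K : ℕ) (α : ℝ) : ℝ :=
  ((K : ℝ) / ((K : ℝ) - 1)) *
    ((∫ z : ℝ, stdGaussianPDF (z - α / Real.sqrt (1 - α ^ 2))
        * stdGaussianCDF z ^ (K - 1)) - 1 / (K : ℝ))

/-- The least index attaining the maximum of `w : Fin K → ℝ`. -/
noncomputable def argmaxIdx {K : ℕ} [NeZero K] (w : Fin K → ℝ) : Fin K :=
  (Finset.univ.filter fun i => ∀ j, w j ≤ w i).min' (by
    obtain ⟨i, -, hi⟩ :=
      Finset.exists_max_image (Finset.univ : Finset (Fin K)) w Finset.univ_nonempty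
    exact ⟨i, Finset.mem_filter.mpr ⟨Finset.mem_univ i, fun j => hi j (Finset.mem_univ j)⟩⟩)

lemma stdGaussianPDF_eq : stdGaussianPDF = gaussianPDFReal 0 1 := by
  ext x
  simp only [stdGaussianPDF, gaussianPDFReal, NNReal.coe_one, mul_one, sub_zero]
  rw [div_eq_mul_inv, mul_comm]

lemma stdGaussianPDF_nonneg (x : ℝ) : 0 ≤ stdGaussianPDF x := by
  rw [stdGaussianPDF_eq]; exact gaussianPDFReal_nonneg 0 1 x

lemma integrable_stdGaussianPDF : Integrable stdGaussianPDF := by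
  rw [stdGaussianPDF_eq]; exact integrable_gaussianPDFReal 0 1

lemma integral_stdGaussianPDF : ∫ x, stdGaussianPDF x = 1 := by
  rw [stdGaussianPDF_eq]; exact integral_gaussianPDFReal_eq_one 0 one_ne_zero

lemma measurable_stdGaussianPDF : Measurable stdGaussianPDF := by
  rw [stdGaussianPDF_eq]; exact measurable_gaussianPDFReal 0 1

lemma stdGaussianCDF_nonneg (t : ℝ) : 0 ≤ stdGaussianCDF t :=
  setIntegral_nonneg measurableSet_Iic fun x _ => stdGaussianPDF_nonneg x

lemma stdGaussianCDF_le_one (t : ℝ) : stdGaussianCDF t ≤ 1 := by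
  rw [← integral_stdGaussianPDF]
  exact setIntegral_le_integral integrable_stdGaussianPDF (ae_of_all _ stdGaussianPDF_nonneg)

lemma monotone_stdGaussianCDF : Monotone stdGaussianCDF := fun a b hab =>
  setIntegral_mono_set integrable_stdGaussianPDF.integrableOn
    (ae_of_all _ fun x => stdGaussianPDF_nonneg x)
    (HasSubset.Subset.eventuallyLE (Set.Iic_subset_Iic.mpr hab))

lemma measurable_stdGaussianCDF : Measurable stdGaussianCDF :=
  monotone_stdGaussianCDF.measurable

lemma gaussianReal_Iio (t : ℝ) :
    gaussianReal 0 1 (Set.Iio t) = ENNReal.ofReal (stdGaussianCDF t) := by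
  rw [gaussianReal_apply_eq_integral 0 one_ne_zero]
  congr 1
  rw [show stdGaussianCDF t = ∫ u in Set.Iic t, stdGaussianPDF u from rfl, stdGaussianPDF_eq]
  exact setIntegral_congr_set Iio_ae_eq_Iic

section Argmax
variable {K : ℕ} [NeZero K]

lemma le_argmaxIdx (w : Fin K → ℝ) (j : Fin K) : w j ≤ w (argmaxIdx w) := by
  have h := Finset.min'_mem (Finset.univ.filter fun i => ∀ j, w j ≤ w i)
    (by
      obtain ⟨i, -, hi⟩ :=
        Finset.exists_max_image (Finset.univ : Finset (Fin K)) w Finset.univ_nonempty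
      exact ⟨i, Finset.mem_filter.mpr ⟨Finset.mem_univ i, fun j => hi j (Finset.mem_univ j)⟩⟩)
  rw [Finset.mem_filter] at h
  exact h.2 j

lemma argmaxIdx_eq_iff (w : Fin K → ℝ) (i : Fin K) :
    argmaxIdx w = i ↔ (∀ j, w j ≤ w i) ∧ ∀ j, (∀ l, w l ≤ w j) → i ≤ j := by
  constructor
  · rintro rfl
    exact ⟨le_argmaxIdx w, fun j hj =>
      Finset.min'_le _ _ (Finset.mem_filter.mpr ⟨Finset.mem_univ _, hj⟩)⟩
  · rintro ⟨h1, h2⟩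
    refine le_antisymm (Finset.min'_le _ _ (Finset.mem_filter.mpr ⟨Finset.mem_univ _, h1⟩))
      (Finset.le_min' _ _ _ ?_)
    intro j hj
    exact h2 j (Finset.mem_filter.mp hj).2

lemma argmaxIdx_eq_of_lt {w : Fin K → ℝ} {i : Fin K} (h : ∀ j, j ≠ i → w j < w i) :
    argmaxIdx w = i := by
  rw [argmaxIdx_eq_iff]
  refine ⟨fun j => ?_, fun j hj => ?_⟩
  · by_cases hji : j = i
    · exact hji ▸ le_rfl
    · exact (h j hji).le
  · by_cases hji : j = i
    · exact hji ▸ le_rfl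
    · exact absurd (hj i) (not_le.mpr (h j hji))

lemma measurableSet_argmaxIdx (i : Fin K) :
    MeasurableSet {w : Fin K → ℝ | argmaxIdx w = i} := by
  have hset : {w : Fin K → ℝ | argmaxIdx w = i}
      = {w | ∀ j, w j ≤ w i} ∩ ⋂ j : Fin K, {w | (∀ l, w l ≤ w j) → i ≤ j} := by
    ext w
    simp only [Set.mem_setOf_eq, Set.mem_inter_iff, Set.mem_iInter, argmaxIdx_eq_iff]
  rw [hset]
  refine MeasurableSet.inter ?_ (MeasurableSet.iInter fun j => ?_)
  · rw [show {w : Fin K → ℝ | ∀ j, w j ≤ w i} = ⋂ j, {w | w j ≤ w i} by ext; simp]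
    exact MeasurableSet.iInter fun j =>
      measurableSet_le (measurable_pi_apply j) (measurable_pi_apply i)
  · by_cases hij : i ≤ j
    · have : {w : Fin K → ℝ | (∀ l, w l ≤ w j) → i ≤ j} = Set.univ := by
        ext w; simp [hij]
      rw [this]; exact MeasurableSet.univ
    · have : {w : Fin K → ℝ | (∀ l, w l ≤ w j) → i ≤ j} = (⋂ l, {w | w l ≤ w j})ᶜ := by
        ext w; simp [hij]
      rw [this]
      exact (MeasurableSet.iInter fun l =>
        measurableSet_le (measurable_pi_apply l) (measurable_pi_apply j)).compl

lemma measurable_argmaxIdx : Measurable (argmaxIdx : (Fin K → ℝ) → Fin K) :=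
  measurable_to_countable' fun i => measurableSet_argmaxIdx i

lemma argmaxIdx_const_mul (w : Fin K → ℝ) {c : ℝ} (hc : 0 < c) :
    argmaxIdx (fun j => c * w j) = argmaxIdx w := by
  obtain ⟨h1, h2⟩ := (argmaxIdx_eq_iff w (argmaxIdx w)).mp rfl
  rw [argmaxIdx_eq_iff]
  exact ⟨fun j => (mul_le_mul_iff_right₀ hc).mpr (h1 j),
    fun j hj => h2 j fun l => (mul_le_mul_iff_right₀ hc).mp (hj l)⟩

end Argmax

section MeasureHelpers

lemma noAtoms_gaussianReal : NoAtoms (gaussianReal (0:ℝ) 1) :=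
  ⟨fun x => gaussianReal_absolutelyContinuous 0 one_ne_zero (measure_singleton x)⟩

lemma pi_tie_null {n : ℕ} (j i : Fin (n+1)) (hji : j ≠ i) (a b : ℝ) :
    (Measure.pi fun _ : Fin (n+1) => gaussianReal 0 1) {w | w j + a = w i + b} = 0 := by
  haveI : NoAtoms (gaussianReal (0:ℝ) 1) := noAtoms_gaussianReal
  obtain ⟨j', hj'⟩ := Fin.exists_succAbove_eq (Ne.symm hji)
  set E : Set (ℝ × (Fin n → ℝ)) := {p | p.2 j' = p.1 + a - b} with hEdef
  have hEm : MeasurableSet E :=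
    measurableSet_eq_fun (measurable_snd.eval) ((measurable_fst.add_const a).sub_const b)
  have hpre : {w : Fin (n+1) → ℝ | w j + a = w i + b}
      = (MeasurableEquiv.piFinSuccAbove (fun _ => ℝ) j) ⁻¹' E := by
    ext w
    simp only [Set.mem_setOf_eq, Set.mem_preimage, MeasurableEquiv.piFinSuccAbove,
      MeasurableEquiv.coe_mk, Equiv.symm_symm, hEdef, Fin.insertNthEquiv,
      Equiv.coe_fn_symm_mk, Fin.removeNth, hj']
    constructor <;> intro h <;> linarith
  rw [hpre, (measurePreserving_piFinSuccAbove (fun _ => gaussianReal 0 1) j).measure_preimage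
    hEm.nullMeasurableSet, Measure.prod_apply hEm]
  have hsec : ∀ x : ℝ, (Measure.pi fun _ : Fin n => gaussianReal 0 1) (Prod.mk x ⁻¹' E) = 0 := by
    intro x
    have hx : Prod.mk x ⁻¹' E = {y : Fin n → ℝ | y j' = x + a - b} := rfl
    rw [hx]
    haveI := nullSingletonClass_gaussianReal (μ := 0) (one_ne_zero (α := NNReal))
    exact Measure.pi_hyperplane _ j' _
  simp [hsec]

lemma pi_strictmax_measure {n : ℕ} (k : Fin (n+1)) (c : ℝ) :
    (Measure.pi fun _ : Fin (n+1) => gaussianReal 0 1) {w | ∀ j, j ≠ k → w j < w k + c}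
      = ENNReal.ofReal (∫ x : ℝ, stdGaussianPDF x * stdGaussianCDF (x + c) ^ n) := by
  set E : Set (ℝ × (Fin n → ℝ)) := {p | ∀ j, p.2 j < p.1 + c} with hEdef
  have hEm : MeasurableSet E := by
    have hE : E = ⋂ j, {p : ℝ × (Fin n → ℝ) | p.2 j < p.1 + c} := by ext p; simp [hEdef]
    rw [hE]
    exact MeasurableSet.iInter fun j =>
      measurableSet_lt (measurable_snd.eval) (measurable_fst.add_const c)
  have hpre : {w : Fin (n+1) → ℝ | ∀ j, j ≠ k → w j < w k + c}
      = (MeasurableEquiv.piFinSuccAbove (fun _ => ℝ) k) ⁻¹' E := by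
    ext w
    simp only [Set.mem_setOf_eq, Set.mem_preimage, MeasurableEquiv.piFinSuccAbove,
      MeasurableEquiv.coe_mk, Equiv.symm_symm, hEdef, Fin.insertNthEquiv,
      Equiv.coe_fn_symm_mk, Fin.removeNth]
    constructor
    · intro h j
      exact h _ (Fin.succAbove_ne k j)
    · intro h j hj
      obtain ⟨j', rfl⟩ := Fin.exists_succAbove_eq hj
      exact h j'
  rw [hpre, (measurePreserving_piFinSuccAbove (fun _ => gaussianReal 0 1) k).measure_preimage
    hEm.nullMeasurableSet, Measure.prod_apply hEm]
  have hinner : ∀ x : ℝ, (Measure.pi fun _ : Fin n => gaussianReal 0 1) (Prod.mk x ⁻¹' E)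
      = ENNReal.ofReal (stdGaussianCDF (x + c) ^ n) := by
    intro x
    have hx : Prod.mk x ⁻¹' E = Set.pi Set.univ (fun _ : Fin n => Set.Iio (x + c)) := by
      ext y; simp [hEdef]
    rw [hx, Measure.pi_pi]
    simp only [gaussianReal_Iio]
    rw [Finset.prod_const, ← ENNReal.ofReal_pow (stdGaussianCDF_nonneg _), Finset.card_univ,
      Fintype.card_fin]
  simp_rw [hinner]
  have hΦm : Measurable fun x : ℝ => ENNReal.ofReal (stdGaussianCDF (x + c) ^ n) :=
    ((measurable_stdGaussianCDF.comp (measurable_id.add_const c)).pow_const n).ennreal_ofReal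
  rw [gaussianReal_of_var_ne_zero 0 one_ne_zero,
    lintegral_withDensity_eq_lintegral_mul _ (measurable_gaussianPDF 0 1) hΦm]
  have hbound : ∀ x : ℝ, ‖stdGaussianPDF x * stdGaussianCDF (x + c) ^ n‖ ≤ ‖stdGaussianPDF x‖ := by
    intro x
    rw [Real.norm_eq_abs, Real.norm_eq_abs,
      abs_of_nonneg (mul_nonneg (stdGaussianPDF_nonneg x)
        (pow_nonneg (stdGaussianCDF_nonneg _) n)),
      abs_of_nonneg (stdGaussianPDF_nonneg x)]
    calc stdGaussianPDF x * stdGaussianCDF (x + c) ^ n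
        ≤ stdGaussianPDF x * 1 := by
          gcongr
          · exact stdGaussianPDF_nonneg x
          · exact pow_le_one₀ (stdGaussianCDF_nonneg _) (stdGaussianCDF_le_one _)
      _ = stdGaussianPDF x := mul_one _
  have hint : Integrable fun x : ℝ => stdGaussianPDF x * stdGaussianCDF (x + c) ^ n :=
    Integrable.mono integrable_stdGaussianPDF
      ((measurable_stdGaussianPDF.mul
        ((measurable_stdGaussianCDF.comp (measurable_id.add_const c)).pow_const n))).aestronglyMeasurable
      (ae_of_all _ hbound)
  rw [ofReal_integral_eq_lintegral_ofReal hint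
    (ae_of_all _ fun x => mul_nonneg (stdGaussianPDF_nonneg x)
      (pow_nonneg (stdGaussianCDF_nonneg _) n))]
  refine lintegral_congr fun x => ?_
  simp only [Pi.mul_apply, gaussianPDF, ← stdGaussianPDF_eq,
    ← ENNReal.ofReal_mul (stdGaussianPDF_nonneg x)]

lemma integral_shift (c : ℝ) (n : ℕ) :
    ∫ x : ℝ, stdGaussianPDF x * stdGaussianCDF (x + c) ^ n
      = ∫ z : ℝ, stdGaussianPDF (z - c) * stdGaussianCDF z ^ n := by
  have h := integral_add_right_eq_self (μ := volume)
    (fun z => stdGaussianPDF (z - c) * stdGaussianCDF z ^ n) c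
  rw [← h]
  congr 1 with x
  simp [add_sub_cancel_right]

lemma pi_perm_invariant {K : ℕ} (e : Equiv.Perm (Fin K)) (s : Set (Fin K → ℝ))
    (hs : MeasurableSet s) :
    (Measure.pi fun _ : Fin K => gaussianReal 0 1) ((fun w => w ∘ e) ⁻¹' s)
      = (Measure.pi fun _ : Fin K => gaussianReal 0 1) s := by
  have hcoe : (fun w : Fin K → ℝ => w ∘ e)
      = ⇑(MeasurableEquiv.piCongrLeft (fun _ : Fin K => ℝ) e.symm) := by
    funext w
    funext j
    have h1 := Equiv.piCongrLeft_apply_apply (fun _ : Fin K => ℝ) e.symm w (e j)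
    rw [Equiv.symm_apply_apply] at h1
    rw [MeasurableEquiv.coe_piCongrLeft]
    exact h1.symm
  rw [hcoe]
  exact (measurePreserving_piCongrLeft (fun _ : Fin K => gaussianReal (0:ℝ) 1) e.symm).measure_preimage
    hs.nullMeasurableSet

end MeasureHelpers

lemma token_std {n : ℕ} (hn : 1 ≤ n) (k i : Fin (n+1)) (β : ℝ) :
    (Measure.pi fun _ : Fin (n+1) => gaussianReal 0 1)
        {w | argmaxIdx (fun j => w j + (if j = k then β else 0)) = i}
      = ENNReal.ofReal (if i = k then ∫ z : ℝ, stdGaussianPDF (z - β) * stdGaussianCDF z ^ n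
          else (1 - ∫ z : ℝ, stdGaussianPDF (z - β) * stdGaussianCDF z ^ n) / n) := by
  set G := (Measure.pi fun _ : Fin (n+1) => gaussianReal 0 1) with hG
  set m : Fin (n+1) → ℝ := fun j => if j = k then β else 0 with hm
  set Ir := ∫ z : ℝ, stdGaussianPDF (z - β) * stdGaussianCDF z ^ n with hIr
  set S : Fin (n+1) → Set (Fin (n+1) → ℝ) :=
    fun i0 => {w | argmaxIdx (fun j => w j + m j) = i0} with hS
  set T : Fin (n+1) → Set (Fin (n+1) → ℝ) :=
    fun i0 => {w | ∀ j, j ≠ i0 → w j + m j < w i0 + m i0} with hT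
  have hTsubS : ∀ i0, T i0 ⊆ S i0 := fun i0 w hw => argmaxIdx_eq_of_lt hw
  have hdiff : ∀ i0, G (S i0 \ T i0) = 0 := by
    intro i0
    have hsub : S i0 \ T i0 ⊆ ⋃ j : Fin (n+1), {w | j ≠ i0 ∧ w j + m j = w i0 + m i0} := by
      intro w hw
      obtain ⟨hwS, hwT⟩ := hw
      simp only [hT, Set.mem_setOf_eq] at hwT
      push_neg at hwT
      obtain ⟨j, hji, hnlt⟩ := hwT
      have hle : w j + m j ≤ w i0 + m i0 := ((argmaxIdx_eq_iff _ _).mp hwS).1 j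
      exact Set.mem_iUnion.mpr ⟨j, hji, le_antisymm hle hnlt⟩
    refine measure_mono_null hsub (measure_iUnion_null fun j => ?_)
    by_cases hji : j = i0
    · simp [hji]
    · exact measure_mono_null (fun w hw => hw.2) (pi_tie_null j i0 hji _ _)
  have hGST : ∀ i0, G (S i0) = G (T i0) := by
    intro i0
    refine le_antisymm ?_ (measure_mono (hTsubS i0))
    calc G (S i0) ≤ G (T i0 ∪ (S i0 \ T i0)) := measure_mono fun w hw => by
          by_cases h : w ∈ T i0
          · exact Or.inl h
          · exact Or.inr ⟨hw, h⟩
      _ ≤ G (T i0) + G (S i0 \ T i0) := measure_union_le _ _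
      _ = G (T i0) := by rw [hdiff i0, add_zero]
  have hTkval : G (T k) = ENNReal.ofReal Ir := by
    have hTk : T k = {w : Fin (n+1) → ℝ | ∀ j, j ≠ k → w j < w k + β} := by
      ext w
      simp only [hT, hm, Set.mem_setOf_eq, if_pos rfl]
      constructor
      · intro h j hj
        simpa [if_neg hj] using h j hj
      · intro h j hj
        simpa [if_neg hj] using h j hj
    rw [hTk, pi_strictmax_measure k β, integral_shift, ← hIr]
  have hTmeas : ∀ i0, MeasurableSet (T i0) := by
    intro i0
    have hTi : T i0 = ⋂ j, {w : Fin (n+1) → ℝ | j ≠ i0 → w j + m j < w i0 + m i0} := by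
      ext w; simp [hT]
    rw [hTi]
    refine MeasurableSet.iInter fun j => ?_
    by_cases hj : j = i0
    · have : {w : Fin (n+1) → ℝ | j ≠ i0 → w j + m j < w i0 + m i0} = Set.univ := by
        ext w; simp [hj]
      rw [this]; exact MeasurableSet.univ
    · have : {w : Fin (n+1) → ℝ | j ≠ i0 → w j + m j < w i0 + m i0}
          = {w | w j + m j < w i0 + m i0} := by
        ext w; simp [hj]
      rw [this]
      exact measurableSet_lt ((measurable_pi_apply j).add_const _)
        ((measurable_pi_apply i0).add_const _)
  have hSmeas : ∀ i0, MeasurableSet (S i0) := by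
    intro i0
    have hf : Measurable fun (w : Fin (n+1) → ℝ) (j : Fin (n+1)) => w j + m j :=
      measurable_pi_lambda _ fun j => (measurable_pi_apply j).add measurable_const
    exact hf (measurableSet_argmaxIdx i0)
  have hsym : ∀ i' i'' : Fin (n+1), i' ≠ k → i'' ≠ k → G (T i') = G (T i'') := by
    intro i' i'' h1 h2
    by_cases h : i' = i''
    · rw [h]
    set e : Equiv.Perm (Fin (n+1)) := Equiv.swap i' i'' with he
    have hek : e k = k := Equiv.swap_apply_of_ne_of_ne (Ne.symm h1) (Ne.symm h2)
    have hme : ∀ j, m (e j) = m j := by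
      intro j
      simp only [hm]
      by_cases hjk : j = k
      · rw [hjk, hek]
      · rw [if_neg hjk, if_neg fun hc => hjk (e.injective (by rw [hc, hek]))]
    have hee : ∀ j, e (e j) = j := fun j => Equiv.swap_apply_self _ _ _
    have hei' : e i' = i'' := Equiv.swap_apply_left _ _
    have hei'' : e i'' = i' := Equiv.swap_apply_right _ _
    have hm12 : m i'' = m i' := by
      simp only [hm]
      rw [if_neg h2, if_neg h1]
    have hpre : (fun w : Fin (n+1) → ℝ => w ∘ e) ⁻¹' (T i'') = T i' := by
      ext w
      simp only [Set.mem_preimage, hT, Set.mem_setOf_eq, Function.comp_apply]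
      constructor
      · intro h j hj
        have key := h (e j) (fun hc => hj (by rw [← hei'', ← hc, hee]))
        rw [hee j, hme j, hei'', hm12] at key
        exact key
      · intro h j hj
        have key := h (e j) (fun hc => hj (by rw [← hei', ← hc, hee]))
        rw [hme j] at key
        rw [hei'', hm12]
        exact key
    rw [← hpre]
    exact pi_perm_invariant e (T i'') (hTmeas i'')
  have hsum : ∑ i0 : Fin (n+1), G (S i0) = 1 := by
    have hdisj : Pairwise (Function.onFun Disjoint S) := by
      intro a b hab
      simp only [Function.onFun, Set.disjoint_left]
      intro w hwa hwb
      exact hab (hwa.symm.trans hwb)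
    have hunion : ⋃ i0, S i0 = Set.univ := by
      ext w
      simp only [Set.mem_iUnion, Set.mem_univ, iff_true]
      exact ⟨argmaxIdx _, rfl⟩
    have hiu := measure_iUnion (μ := G) hdisj fun i0 => hSmeas i0
    rw [hunion, measure_univ, tsum_fintype] at hiu
    exact hiu.symm
  have hIr0 : 0 ≤ Ir :=
    integral_nonneg fun z => mul_nonneg (stdGaussianPDF_nonneg _)
      (pow_nonneg (stdGaussianCDF_nonneg _) n)
  by_cases hik : i = k
  · subst hik
    rw [if_pos rfl, hGST, hTkval]
  · rw [if_neg hik]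
    have hPval : ∀ i0, i0 ≠ k → G (S i0) = G (T i) :=
      fun i0 h0 => (hGST i0).trans (hsym i0 i h0 hik)
    have hsum2 : ENNReal.ofReal Ir + (n : ENNReal) * G (T i) = 1 := by
      rw [← hsum, ← Finset.add_sum_erase _ _ (Finset.mem_univ k)]
      congr 1
      · rw [hGST k, hTkval]
      · rw [Finset.sum_congr rfl fun i0 hi0 => hPval i0 (Finset.ne_of_mem_erase hi0),
          Finset.sum_const, Finset.card_erase_of_mem (Finset.mem_univ k), Finset.card_univ,
          Fintype.card_fin, nsmul_eq_mul]
        norm_num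
    have hfin : G (T i) ≠ ⊤ := (measure_lt_top G _).ne
    have hreal : Ir + (n : ℝ) * (G (T i)).toReal = 1 := by
      have h := congrArg ENNReal.toReal hsum2
      rw [ENNReal.toReal_add (by simp) (ENNReal.mul_ne_top (by simp) hfin),
        ENNReal.toReal_mul, ENNReal.toReal_ofReal hIr0, ENNReal.toReal_one,
        ENNReal.toReal_natCast] at h
      exact h
    have hn0 : (n : ℝ) ≠ 0 := Nat.cast_ne_zero.mpr (by omega)
    have hGTi : G (T i) = ENNReal.ofReal ((1 - Ir) / n) := by
      rw [← ENNReal.ofReal_toReal hfin]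
      congr 1
      field_simp
      linarith
    rw [hGST i, hGTi]

lemma token_gauss (K : ℕ) (hK : 2 ≤ K) [NeZero K] (k i : Fin K) (α : ℝ)
    (hα0 : 0 ≤ α) (hα1 : α < 1) :
    (Measure.pi fun j : Fin K =>
        gaussianReal (if j = k then α else 0) (Real.toNNReal (1 - α ^ 2)))
        {w | argmaxIdx w = i}
      = ENNReal.ofReal (diffTransform K α * (if i = k then 1 else 0)
          + (1 - diffTransform K α) / (K : ℝ)) := by
  obtain ⟨n, rfl⟩ : ∃ n, K = n + 1 := ⟨K - 1, by omega⟩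
  have hn : 1 ≤ n := by omega
  have hα2 : (0:ℝ) < 1 - α ^ 2 := by nlinarith
  set σ := Real.sqrt (1 - α ^ 2) with hσdef
  have hσ : 0 < σ := Real.sqrt_pos.mpr hα2
  have hσ2 : σ ^ 2 = 1 - α ^ 2 := Real.sq_sqrt hα2.le
  set m0 : Fin (n+1) → ℝ := fun j => if j = k then α else 0 with hm0
  have hmarg : ∀ j : Fin (n+1), MeasurePreserving (fun u : ℝ => σ * u + m0 j)
      (gaussianReal 0 1) (gaussianReal (m0 j) (Real.toNNReal (1 - α ^ 2))) := by
    intro j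
    constructor
    · exact (measurable_id.const_mul σ).add_const _
    · have h1 : (gaussianReal 0 1).map (fun u => σ * u)
          = gaussianReal (σ * 0) (⟨σ ^ 2, sq_nonneg σ⟩ * 1) :=
        gaussianReal_map_const_mul σ
      have hv : (⟨σ ^ 2, sq_nonneg σ⟩ * 1 : NNReal) = Real.toNNReal (1 - α ^ 2) := by
        ext
        simp [hσ2, Real.coe_toNNReal _ hα2.le]
        exact mul_one _
      have h2 : (gaussianReal 0 1).map (fun u => σ * u + m0 j)
          = ((gaussianReal 0 1).map (fun u => σ * u)).map (· + m0 j) :=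
        (Measure.map_map (measurable_id.add_const _) (measurable_id.const_mul σ)).symm
      rw [h2, h1, hv, gaussianReal_map_add_const, mul_zero, zero_add]
  have hmp : MeasurePreserving (fun (w : Fin (n+1) → ℝ) (j : Fin (n+1)) => σ * w j + m0 j)
      (Measure.pi fun _ => gaussianReal 0 1)
      (Measure.pi fun j => gaussianReal (m0 j) (Real.toNNReal (1 - α ^ 2))) :=
    measurePreserving_pi _ _ hmarg
  have hgoal : (Measure.pi fun j : Fin (n+1) =>
      gaussianReal (if j = k then α else 0) (Real.toNNReal (1 - α ^ 2)))
        {w | argmaxIdx w = i}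
      = (Measure.pi fun j => gaussianReal (m0 j) (Real.toNNReal (1 - α ^ 2)))
        {w | argmaxIdx w = i} := rfl
  rw [hgoal, ← hmp.measure_preimage (measurableSet_argmaxIdx i).nullMeasurableSet]
  have hpre : (fun (w : Fin (n+1) → ℝ) (j : Fin (n+1)) => σ * w j + m0 j) ⁻¹'
        {w | argmaxIdx w = i}
      = {w | argmaxIdx (fun j => w j + (if j = k then α / σ else 0)) = i} := by
    ext w
    simp only [Set.mem_preimage, Set.mem_setOf_eq]
    have hfe : (fun j => σ * w j + m0 j)
        = fun j => σ * (w j + (if j = k then α / σ else 0)) := by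
      funext j
      by_cases hj : j = k
      · simp [hm0, hj, mul_add, mul_div_cancel₀ _ hσ.ne']
      · simp [hm0, hj]
    rw [hfe, argmaxIdx_const_mul _ hσ]
  rw [hpre, token_std hn k i (α / σ)]
  have hcast : ((n:ℝ) + 1) ≠ 0 := by positivity
  have hn0 : (n : ℝ) ≠ 0 := Nat.cast_ne_zero.mpr (by omega)
  have hT : diffTransform (n+1) α
      = (((n:ℝ)+1) / (n:ℝ)) *
        ((∫ z : ℝ, stdGaussianPDF (z - α / σ) * stdGaussianCDF z ^ n) - 1 / ((n:ℝ)+1)) := by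
    simp only [diffTransform, hσdef]
    norm_num
  set Ir := ∫ z : ℝ, stdGaussianPDF (z - α / σ) * stdGaussianCDF z ^ n with hIr
  by_cases hik : i = k
  · rw [if_pos hik, if_pos hik]
    congr 1
    rw [hT]
    push_cast
    field_simp
    ring
  · rw [if_neg hik, if_neg hik]
    congr 1
    rw [hT]
    push_cast
    field_simp
    ring

/-- **Sequence-level diffusion duality.**  The coordinatewise argmax pushforward of the
factorized Gaussian process `⨂_ℓ N(ᾱ e_{k ℓ}, (1-ᾱ²) I_K)` is the product over tokens of
the Uniform-state categorical marginals `Cat(𝒯(ᾱ) e_{k ℓ} + (1-𝒯(ᾱ)) 𝟙/K)`: its mass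
at any sequence `z` is the product over `ℓ` of the token-level categorical masses. -/
theorem sequence_level_diffusion_duality (K L : ℕ) (hK : 2 ≤ K) [NeZero K] (hL : 1 ≤ L)
    (k : Fin L → Fin K) (α : ℝ) (hα0 : 0 ≤ α) (hα1 : α < 1) (z : Fin L → Fin K) :
    (Measure.map (fun (W : Fin L → Fin K → ℝ) (ℓ : Fin L) => argmaxIdx (W ℓ))
        (Measure.pi fun ℓ : Fin L =>
          Measure.pi fun i : Fin K =>
            gaussianReal (if i = k ℓ then α else 0) (Real.toNNReal (1 - α ^ 2)))) {z}
      = ∏ ℓ : Fin L,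
          ENNReal.ofReal
            (diffTransform K α * (if z ℓ = k ℓ then 1 else 0)
              + (1 - diffTransform K α) / (K : ℝ)) := by
  have hmeas : Measurable (fun (W : Fin L → Fin K → ℝ) (ℓ : Fin L) => argmaxIdx (W ℓ)) :=
    measurable_pi_lambda _ fun ℓ => measurable_argmaxIdx.comp (measurable_pi_apply ℓ)
  rw [Measure.map_apply hmeas (measurableSet_singleton z)]
  have hpre : (fun (W : Fin L → Fin K → ℝ) (ℓ : Fin L) => argmaxIdx (W ℓ)) ⁻¹' {z}
      = Set.pi Set.univ fun ℓ => {w : Fin K → ℝ | argmaxIdx w = z ℓ} := by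
    ext W
    simp [Set.mem_pi, funext_iff]
  rw [hpre, Measure.pi_pi]
  exact Finset.prod_congr rfl fun ℓ _ => token_gauss K hK (k ℓ) (z ℓ) α hα0 hα1
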